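/- The following are equivalent: (1) φ has exactly one prime implicant; (2) the cubical set C_φ is a convex subset of [0,1]^n; (3) the semantic loss L(μ) = −log Σ_{w : φ(w)=1} p_μ(w) is a convex function of μ on its domain {μ ∈ [0,1]^n : Σ_{w : φ(w)=1} p_μ(w) > 0}. -/

import Mathlib

/-- A world is an assignment of Boolean values to `n` variables. -/
abbrev World (n : ℕ) := Fin n → Bool

/-- The independent distribution with parameters `μ`:
`p_μ(w) = ∏ i, μ i ^ (w i) * (1 - μ i) ^ (1 - w i)`. -/
def pInd {n : ℕ} (μ : Fin n → ℝ) (w : World n) : ℝ :=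
  ∏ i, if w i then μ i else 1 - μ i

/-- A partial assignment with domain `D` and values `a` covers the world `w`. -/
def covers {n : ℕ} (D : Set (Fin n)) (a : Fin n → Bool) (w : World n) : Prop :=
  ∀ i ∈ D, w i = a i

/-- The cover of a partial assignment: all worlds agreeing with it on its domain. -/
def coverSet {n : ℕ} (D : Set (Fin n)) (a : Fin n → Bool) : Set (World n) :=
  {w | covers D a w}

/-- A partial assignment is an implicant of `φ` if every world in its cover is possible. -/
def Implicant {n : ℕ} (φ : World n → Bool) (D : Set (Fin n)) (a : Fin n → Bool) : Prop :=
  ∀ w : World n, covers D a w → φ w = true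

/-- A prime implicant: an implicant whose cover is not strictly contained in the cover
of another implicant. -/
def PrimeImplicant {n : ℕ} (φ : World n → Bool) (D : Set (Fin n)) (a : Fin n → Bool) : Prop :=
  Implicant φ D a ∧ ∀ (E : Set (Fin n)) (b : Fin n → Bool),
    Implicant φ E b → ¬ (coverSet D a ⊂ coverSet E b)

/-- The deterministic coordinates of the parameter vector `μ`. -/
def detDom {n : ℕ} (μ : Fin n → ℝ) : Set (Fin n) := {i | μ i = 0 ∨ μ i = 1}

/-- The value assigned by `μ` at a deterministic coordinate. -/
noncomputable def detVal {n : ℕ} (μ : Fin n → ℝ) (i : Fin n) : Bool :=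
  if μ i = 1 then true else false

/-- A distribution over worlds: nonnegative, summing to one. -/
def IsDistribution {n : ℕ} (p : World n → ℝ) : Prop :=
  (∀ w, 0 ≤ p w) ∧ ∑ w, p w = 1

/-- A distribution is possible for `φ` if it vanishes on all impossible worlds. -/
def PossibleDist {n : ℕ} (φ : World n → Bool) (p : World n → ℝ) : Prop :=
  ∀ w, φ w = false → p w = 0

/-- The unit hypercube of parameters. -/
def unitCube (n : ℕ) : Set (Fin n → ℝ) := {μ | ∀ i, μ i ∈ Set.Icc (0:ℝ) 1}

/-- The implicant cube of a partial assignment: coordinates in `D` are fixed,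
the others range over `[0,1]`. -/
def implicantCube {n : ℕ} (D : Set (Fin n)) (a : Fin n → Bool) : Set (Fin n → ℝ) :=
  {μ | (∀ i, μ i ∈ Set.Icc (0:ℝ) 1) ∧ ∀ i ∈ D, μ i = if a i then 1 else 0}

/-- The cubical set of `φ`: the union of the prime implicant cubes. -/
def cubicalSet {n : ℕ} (φ : World n → Bool) : Set (Fin n → ℝ) :=
  ⋃ (D : Set (Fin n)) (a : Fin n → Bool) (_ : PrimeImplicant φ D a), implicantCube D a

/-- The weighted model count `Σ_{w : φ(w)=1} p_μ(w)`. -/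
noncomputable def WMC {n : ℕ} (φ : World n → Bool) (μ : Fin n → ℝ) : ℝ :=
  ∑ w : World n, if φ w then pInd μ w else 0

/-- A world regarded as a point of `[0,1]^n ⊆ ℝ^n`. -/
def worldPoint {n : ℕ} (w : World n) : Fin n → ℝ := fun i => if w i then 1 else 0

/-- An elementary interval is `{0}`, `{1}` or `[0,1]`. -/
def ElemInterval (I : Set ℝ) : Prop := I = {0} ∨ I = {1} ∨ I = Set.Icc 0 1

/-- An elementary cube is a product of elementary intervals. -/
def IsElemCube {n : ℕ} (C : Set (Fin n → ℝ)) : Prop :=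
  ∃ I : Fin n → Set ℝ, (∀ i, ElemInterval (I i)) ∧ C = {x | ∀ i, x i ∈ I i}

section Aux
variable {n : ℕ}

lemma sum_prod_bool (g : Fin n → Bool → ℝ) :
    ∑ w : World n, ∏ i, g i (w i) = ∏ i, (g i true + g i false) := by
  have h : ∀ i, g i true + g i false = ∑ b : Bool, g i b := by
    intro i; rw [Fintype.sum_bool]
  simp_rw [h]
  rw [Finset.prod_univ_sum, Fintype.piFinset_univ]

lemma self_mem_coverSet (D : Set (Fin n)) (a : Fin n → Bool) : a ∈ coverSet D a :=
  fun _ _ => rfl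

lemma exists_prime_above {φ : World n → Bool} {D : Set (Fin n)} {a : Fin n → Bool}
    (h : Implicant φ D a) :
    ∃ E b, PrimeImplicant φ E b ∧ coverSet D a ⊆ coverSet E b := by
  classical
  set S : Set (Set (World n)) :=
    {T | ∃ E b, Implicant φ E b ∧ T = coverSet E b ∧ coverSet D a ⊆ T} with hS
  have hfin : S.Finite := Set.toFinite S
  have hne : S.Nonempty := ⟨coverSet D a, D, a, h, rfl, subset_rfl⟩
  obtain ⟨T, hTS, hmax⟩ := Set.Finite.exists_maximalFor id S hfin hne
  obtain ⟨E, b, hEb, rfl, hsub⟩ := hTS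
  refine ⟨E, b, ⟨hEb, ?_⟩, hsub⟩
  rintro E' b' hE' hss
  have hmem : coverSet E' b' ∈ S := ⟨E', b', hE', rfl, hsub.trans hss.subset⟩
  have := hmax hmem hss.subset
  exact hss.2 this

lemma coverSet_full (w : World n) : coverSet Set.univ w = {w} := by
  ext w'
  constructor
  · intro hw'; exact funext fun i => hw' i trivial
  · rintro rfl; exact self_mem_coverSet _ _

lemma mem_and_val_of_cover_eq {D E : Set (Fin n)} {a b : Fin n → Bool}
    (h : coverSet D a = coverSet E b) : ∀ i ∈ E, i ∈ D ∧ a i = b i := by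
  classical
  intro i hiE
  have haE : a ∈ coverSet E b := h ▸ self_mem_coverSet D a
  have hab : a i = b i := haE i hiE
  refine ⟨?_, hab⟩
  by_contra hiD
  have hw : Function.update a i (!(a i)) ∈ coverSet D a := by
    intro j hj
    have : j ≠ i := fun hji => hiD (hji ▸ hj)
    simp [Function.update_of_ne this]
  have := (h ▸ hw) i hiE
  rw [Function.update_self] at this
  rw [hab] at this
  exact (Bool.not_ne_self (b i)) this









open Classical in
noncomputable def mVec {n : ℕ} (D : Set (Fin n)) (a : Fin n → Bool) : Fin n → ℝ :=
  fun i => if i ∈ D then (if a i then 1 else 0) else 1/2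

variable {n : ℕ}

lemma mVec_mem_cube (D : Set (Fin n)) (a : Fin n → Bool) : mVec D a ∈ unitCube n := by
  intro i
  unfold mVec
  split_ifs <;> constructor <;> norm_num

lemma pInd_nonneg {μ : Fin n → ℝ} (hμ : μ ∈ unitCube n) (w : World n) : 0 ≤ pInd μ w := by
  apply Finset.prod_nonneg
  intro i _
  rcases hμ i with ⟨h0, h1⟩
  split <;> linarith

lemma sum_pInd (μ : Fin n → ℝ) : ∑ w : World n, pInd μ w = 1 := by
  unfold pInd
  rw [sum_prod_bool (fun i b => if b then μ i else 1 - μ i)]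
  have h1 : ∀ i : Fin n, ((if true then μ i else 1 - μ i) + (if false then μ i else 1 - μ i)) = 1 := by
    intro i; simp
  simp [h1]

lemma pInd_eq_zero_of_not_covers {μ : Fin n → ℝ} {D : Set (Fin n)} {a : Fin n → Bool}
    (hμ : ∀ i ∈ D, μ i = if a i then 1 else 0) {w : World n}
    (hw : ¬ covers D a w) : pInd μ w = 0 := by
  unfold covers at hw
  push_neg at hw
  obtain ⟨i, hiD, hne⟩ := hw
  apply Finset.prod_eq_zero (Finset.mem_univ i)
  have hv := hμ i hiD
  cases ha : a i
  · rw [ha] at hv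
    norm_num at hv
    have hwt : w i = true := by
      cases hw2 : w i
      · exact absurd (by rw [hw2, ha]) hne
      · rfl
    rw [if_pos hwt, hv]
  · rw [ha] at hv
    norm_num at hv
    have hwt : w i = false := by
      cases hw2 : w i
      · rfl
      · exact absurd (by rw [hw2, ha]) hne
    rw [if_neg (by simp [hwt]), hv]
    ring

lemma pInd_pos {μ : Fin n → ℝ} (hμ : μ ∈ unitCube n) {w : World n}
    (hc : covers (detDom μ) (detVal μ) w) : 0 < pInd μ w := by
  apply Finset.prod_pos
  intro i _
  rcases hμ i with ⟨h0, h1⟩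
  by_cases hwi : w i = true
  · rw [if_pos hwi]
    refine lt_of_le_of_ne h0 fun h0' => ?_
    have ht : w i = detVal μ i := hc i (Or.inl h0'.symm)
    rw [hwi] at ht
    unfold detVal at ht
    rw [if_neg (by rw [← h0']; norm_num)] at ht
    simp at ht
  · have hwf : w i = false := by simpa using hwi
    rw [if_neg hwi]
    have hne1 : μ i ≠ 1 := by
      intro h1'
      have ht : w i = detVal μ i := hc i (Or.inr h1')
      rw [hwf] at ht
      unfold detVal at ht
      rw [if_pos h1'] at ht
      simp at ht
    have : μ i < 1 := lt_of_le_of_ne h1 hne1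
    linarith

lemma unique_prime_char {φ : World n → Bool}
    (h1 : {T : Set (World n) | ∃ (D : Set (Fin n)) (a : Fin n → Bool),
      PrimeImplicant φ D a ∧ T = coverSet D a}.ncard = 1) :
    ∃ D a, PrimeImplicant φ D a ∧
      (∀ E b, PrimeImplicant φ E b → coverSet E b = coverSet D a) ∧
      (∀ w, φ w = true ↔ covers D a w) := by
  rw [Set.ncard_eq_one] at h1
  obtain ⟨T0, hT0⟩ := h1
  have hT0mem : T0 ∈ {T : Set (World n) | ∃ D a, PrimeImplicant φ D a ∧ T = coverSet D a} := by
    rw [hT0]; rfl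
  obtain ⟨D, a, hDa, hTeq⟩ := hT0mem
  refine ⟨D, a, hDa, ?_, ?_⟩
  · intro E b hEb
    have : coverSet E b ∈ {T : Set (World n) | ∃ D a, PrimeImplicant φ D a ∧ T = coverSet D a} :=
      ⟨E, b, hEb, rfl⟩
    rw [hT0] at this
    rw [Set.mem_singleton_iff.mp this, hTeq]
  · intro w
    constructor
    · intro hw
      have himpl : Implicant φ Set.univ w := by
        intro w' hw'
        have : w' = w := funext fun i => hw' i trivial
        rw [this]; exact hw
      obtain ⟨E, b, hEb, hsub⟩ := exists_prime_above himpl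
      have hcov : coverSet E b ∈ {T : Set (World n) | ∃ D a, PrimeImplicant φ D a ∧ T = coverSet D a} :=
        ⟨E, b, hEb, rfl⟩
      rw [hT0] at hcov
      have hEq : coverSet E b = coverSet D a := by
        rw [Set.mem_singleton_iff.mp hcov, hTeq]
      have : w ∈ coverSet E b := hsub (self_mem_coverSet _ _)
      rw [hEq] at this
      exact this
    · intro hw
      exact hDa.1 w hw

open Classical in
lemma WMC_factor {φ : World n → Bool} {D : Set (Fin n)} {a : Fin n → Bool}
    (hchar : ∀ w, φ w = true ↔ covers D a w) (μ : Fin n → ℝ) :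
    WMC φ μ = ∏ i, (if i ∈ D then (if a i then μ i else 1 - μ i) else 1) := by
  classical
  set f : Fin n → Bool → ℝ := fun i c => if i ∈ D ∧ c ≠ a i then 0
    else (if c then μ i else 1 - μ i) with hf
  have hstep : ∀ w : World n, (if φ w then pInd μ w else 0) = ∏ i, f i (w i) := by
    intro w
    by_cases hw : φ w = true
    · rw [if_pos hw]
      have hcov := (hchar w).mp hw
      unfold pInd
      apply Finset.prod_congr rfl
      intro i _
      rw [hf]
      simp only
      have hni : ¬ (i ∈ D ∧ w i ≠ a i) := by
        rintro ⟨hiD, hne⟩; exact hne (hcov i hiD)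
      rw [if_neg hni]
    · rw [if_neg hw]
      have hncov : ¬ covers D a w := fun hc => hw ((hchar w).mpr hc)
      unfold covers at hncov
      push_neg at hncov
      obtain ⟨i, hiD, hne⟩ := hncov
      symm
      apply Finset.prod_eq_zero (Finset.mem_univ i)
      rw [hf]
      simp only
      rw [if_pos ⟨hiD, hne⟩]
  unfold WMC
  simp_rw [hstep]
  rw [sum_prod_bool f]
  apply Finset.prod_congr rfl
  intro i _
  rw [hf]
  simp only
  by_cases hiD : i ∈ D
  · cases ha : a i <;> simp [hiD, ha]
  · simp only [hiD, false_and, if_false]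
    norm_num

lemma two_primes_of_ncard_ne_one {φ : World n → Bool} (hφ : ∃ w, φ w = true)
    (h1 : {T : Set (World n) | ∃ (D : Set (Fin n)) (a : Fin n → Bool),
      PrimeImplicant φ D a ∧ T = coverSet D a}.ncard ≠ 1) :
    ∃ D1 a1 D2 a2, PrimeImplicant φ D1 a1 ∧ PrimeImplicant φ D2 a2 ∧
      coverSet D1 a1 ≠ coverSet D2 a2 := by
  obtain ⟨w0, hw0⟩ := hφ
  have himpl : Implicant φ Set.univ w0 := by
    intro w' hw'
    have : w' = w0 := funext fun i => hw' i trivial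
    rw [this]; exact hw0
  obtain ⟨D1, a1, hD1, _⟩ := exists_prime_above himpl
  set S : Set (Set (World n)) := {T | ∃ D a, PrimeImplicant φ D a ∧ T = coverSet D a} with hS
  by_cases hall : ∀ T ∈ S, T = coverSet D1 a1
  · exfalso
    apply h1
    have : S = {coverSet D1 a1} := by
      apply Set.eq_singleton_iff_unique_mem.mpr
      exact ⟨⟨D1, a1, hD1, rfl⟩, hall⟩
    rw [this, Set.ncard_singleton]
  · push_neg at hall
    obtain ⟨T2, hT2S, hT2ne⟩ := hall
    obtain ⟨D2, a2, hD2, rfl⟩ := hT2S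
    exact ⟨D1, a1, D2, a2, hD1, hD2, fun h => hT2ne h.symm⟩

section Mid
variable {φ : World n → Bool} {D1 D2 : Set (Fin n)} {a1 a2 : Fin n → Bool}

/-- The midpoint of the two cube centres. -/
noncomputable def midVec (D1 D2 : Set (Fin n)) (a1 a2 : Fin n → Bool) : Fin n → ℝ :=
  fun i => (mVec D1 a1 i + mVec D2 a2 i) / 2

lemma midVec_mem_cube (D1 D2 : Set (Fin n)) (a1 a2 : Fin n → Bool) :
    midVec D1 D2 a1 a2 ∈ unitCube n := by
  intro i
  rcases mVec_mem_cube D1 a1 i with ⟨h1, h2⟩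
  rcases mVec_mem_cube D2 a2 i with ⟨h3, h4⟩
  unfold midVec
  constructor <;> [linarith; linarith]

open Classical in
lemma midVec_det (i : Fin n)
    (h : midVec D1 D2 a1 a2 i = 0 ∨ midVec D1 D2 a1 a2 i = 1) :
    i ∈ D1 ∧ i ∈ D2 ∧ a1 i = a2 i ∧
      midVec D1 D2 a1 a2 i = (if a1 i then 1 else 0) := by
  classical
  unfold midVec mVec at h ⊢
  by_cases h1 : i ∈ D1 <;> by_cases h2 : i ∈ D2 <;>
    simp only [h1, h2, if_pos, if_neg, if_true, if_false] at h ⊢ <;>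
    cases hb1 : a1 i <;> cases hb2 : a2 i <;>
    simp only [hb1, hb2, if_true, if_false, Bool.false_eq_true] at h ⊢ <;>
    norm_num at *

/-- Key step: no implicant's cube contains the midpoint. -/
lemma midVec_no_implicant (hP1 : PrimeImplicant φ D1 a1) (hP2 : PrimeImplicant φ D2 a2)
    (hne : coverSet D1 a1 ≠ coverSet D2 a2) {E : Set (Fin n)} {b : Fin n → Bool}
    (hEb : Implicant φ E b)
    (hval : ∀ i ∈ E, midVec D1 D2 a1 a2 i = if b i then 1 else 0) : False := by
  classical
  -- the values on E are deterministic
  have hdet : ∀ i ∈ E, i ∈ D1 ∧ i ∈ D2 ∧ a1 i = a2 i ∧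
      midVec D1 D2 a1 a2 i = (if a1 i then 1 else 0) := by
    intro i hi
    apply midVec_det i
    rw [hval i hi]
    cases b i <;> simp
  have hb1 : ∀ i ∈ E, b i = a1 i := by
    intro i hi
    have h1 := hval i hi
    have h2 := (hdet i hi).2.2.2
    rw [h1] at h2
    cases hbi : b i <;> cases ha1i : a1 i <;> rw [hbi, ha1i] at h2 <;> norm_num at h2 <;> rfl
  have hsub1 : coverSet D1 a1 ⊆ coverSet E b := by
    intro w hw i hi
    rw [hb1 i hi]
    exact hw i (hdet i hi).1
  have hsub2 : coverSet D2 a2 ⊆ coverSet E b := by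
    intro w hw i hi
    rw [hb1 i hi, (hdet i hi).2.2.1]
    exact hw i (hdet i hi).2.1
  -- get a world in T2 \ T1
  have hnsub : ¬ coverSet D2 a2 ⊆ coverSet D1 a1 := by
    intro hsub
    exact hP2.2 D1 a1 hP1.1 ⟨hsub, fun h' => hne (Set.Subset.antisymm hsub h').symm⟩
  obtain ⟨w2, hw2T2, hw2T1⟩ := Set.not_subset.mp hnsub
  exact hP1.2 E b hEb ⟨hsub1, fun h' => hw2T1 (h' (hsub2 hw2T2))⟩

end Mid

lemma implicantCube_eq_of_cover_eq {D E : Set (Fin n)} {a b : Fin n → Bool}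
    (h : coverSet D a = coverSet E b) : implicantCube D a = implicantCube E b := by
  have h1 := mem_and_val_of_cover_eq h
  have h2 := mem_and_val_of_cover_eq h.symm
  ext μ
  constructor
  · rintro ⟨hc, hv⟩
    refine ⟨hc, fun i hi => ?_⟩
    obtain ⟨hiD, hab⟩ := h1 i hi
    rw [← hab]; exact hv i hiD
  · rintro ⟨hc, hv⟩
    refine ⟨hc, fun i hi => ?_⟩
    obtain ⟨hiE, hba⟩ := h2 i hi
    rw [← hba]; exact hv i hiE

lemma convex_implicantCube (D : Set (Fin n)) (a : Fin n → Bool) :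
    Convex ℝ (implicantCube D a) := by
  rintro x ⟨hxc, hxv⟩ y ⟨hyc, hyv⟩ s t hs ht hst
  constructor
  · intro i
    rcases hxc i with ⟨hx0, hx1⟩; rcases hyc i with ⟨hy0, hy1⟩
    constructor <;> simp only [Pi.add_apply, Pi.smul_apply, smul_eq_mul] <;> nlinarith
  · intro i hi
    have hx := hxv i hi; have hy := hyv i hi
    simp only [Pi.add_apply, Pi.smul_apply, smul_eq_mul, hx, hy]
    split_ifs <;> ring_nf <;> linarith

lemma combo_pos {s t x y : ℝ} (hs : 0 ≤ s) (ht : 0 ≤ t) (hst : s + t = 1)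
    (hx : 0 < x) (hy : 0 < y) : 0 < s * x + t * y := by
  rcases eq_or_lt_of_le hs with h | h
  · rw [← h]
    have h1 : t = 1 := by linarith
    rw [h1]
    simpa using hy
  · have h1 : 0 < s * x := mul_pos h hx
    have h2 : 0 ≤ t * y := mul_nonneg ht hy.le
    linarith

lemma WMC_mVec_eq_one {φ : World n → Bool} {D : Set (Fin n)} {a : Fin n → Bool}
    (h : Implicant φ D a) : WMC φ (mVec D a) = 1 := by
  unfold WMC
  rw [← sum_pInd (mVec D a)]
  apply Finset.sum_congr rfl
  intro w _
  by_cases hw : φ w = true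
  · rw [if_pos hw]
  · rw [if_neg hw]
    symm
    apply pInd_eq_zero_of_not_covers (D := D) (a := a)
    · intro i hi
      simp [mVec, hi]
    · intro hc
      exact hw (h w hc)


/-- Convexity: `φ` has exactly one prime implicant iff `C_φ` is convex
iff the semantic loss is convex on its domain. -/
theorem stmt4 (n : ℕ) (hn : 1 ≤ n) (φ : World n → Bool) (hφ : ∃ w, φ w = true) :
    List.TFAE [
      -- (1) there is exactly one prime implicant of `φ`
      {T : Set (World n) | ∃ (D : Set (Fin n)) (a : Fin n → Bool),
        PrimeImplicant φ D a ∧ T = coverSet D a}.ncard = 1,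
      -- (2) the cubical set `C_φ` is convex
      Convex ℝ (cubicalSet φ),
      -- (3) the semantic loss is convex on its domain
      ConvexOn ℝ {μ : Fin n → ℝ | μ ∈ unitCube n ∧ 0 < WMC φ μ}
        (fun μ => -Real.log (WMC φ μ))] := by
  classical
  tfae_have 1 → 2 := by
    intro h1
    obtain ⟨D, a, hDa, hucov, hchar⟩ := unique_prime_char h1
    have hset : cubicalSet φ = implicantCube D a := by
      apply Set.Subset.antisymm
      · intro μ hμ
        simp only [cubicalSet, Set.mem_iUnion] at hμ
        obtain ⟨D', a', hP', hμ'⟩ := hμ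
        rwa [implicantCube_eq_of_cover_eq (hucov D' a' hP')] at hμ'
      · intro μ hμ
        simp only [cubicalSet, Set.mem_iUnion]
        exact ⟨D, a, hDa, hμ⟩
    rw [hset]
    exact convex_implicantCube D a
  tfae_have 1 → 3 := by
    intro h1
    obtain ⟨D, a, hDa, hucov, hchar⟩ := unique_prime_char h1
    set g : (Fin n → ℝ) → Fin n → ℝ :=
      fun μ i => if i ∈ D then (if a i then μ i else 1 - μ i) else 1 with hg
    have hfact : ∀ μ, WMC φ μ = ∏ i, g μ i := fun μ => WMC_factor hchar μ
    have hgnn : ∀ μ ∈ unitCube n, ∀ i, 0 ≤ g μ i := by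
      intro μ hμ i
      rcases hμ i with ⟨h0, h1'⟩
      rw [hg]
      simp only
      split_ifs <;> linarith
    have hgpos : ∀ μ ∈ {μ : Fin n → ℝ | μ ∈ unitCube n ∧ 0 < WMC φ μ}, ∀ i, 0 < g μ i := by
      rintro μ ⟨hc, hpos⟩ i
      refine lt_of_le_of_ne (hgnn μ hc i) fun h0 => ?_
      rw [hfact, Finset.prod_eq_zero (Finset.mem_univ i) h0.symm] at hpos
      exact lt_irrefl 0 hpos
    have hcombo : ∀ (x y : Fin n → ℝ) (s t : ℝ), s + t = 1 → ∀ i,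
        g (s • x + t • y) i = s * g x i + t * g y i := by
      intro x y s t hst i
      rw [hg]
      simp only [Pi.add_apply, Pi.smul_apply, smul_eq_mul]
      split_ifs
      · ring
      · linear_combination -hst
      · linear_combination -hst
    constructor
    · -- the domain is convex
      rintro x ⟨hxc, hxw⟩ y ⟨hyc, hyw⟩ s t hs ht hst
      have hcc : s • x + t • y ∈ unitCube n := by
        intro i
        rcases hxc i with ⟨hx0, hx1⟩
        rcases hyc i with ⟨hy0, hy1⟩
        constructor <;> simp only [Pi.add_apply, Pi.smul_apply, smul_eq_mul] <;> nlinarith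
      refine ⟨hcc, ?_⟩
      rw [hfact]
      apply Finset.prod_pos
      intro i _
      rw [hcombo x y s t hst i]
      exact combo_pos hs ht hst (hgpos x ⟨hxc, hxw⟩ i) (hgpos y ⟨hyc, hyw⟩ i)
    · -- the convexity inequality
      rintro x ⟨hxc, hxw⟩ y ⟨hyc, hyw⟩ s t hs ht hst
      have hgx := fun i => hgpos x ⟨hxc, hxw⟩ i
      have hgy := fun i => hgpos y ⟨hyc, hyw⟩ i
      have hgz : ∀ i, 0 < g (s • x + t • y) i := by
        intro i
        rw [hcombo x y s t hst i]
        exact combo_pos hs ht hst (hgx i) (hgy i)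
      have hlog : ∀ i, s * Real.log (g x i) + t * Real.log (g y i)
          ≤ Real.log (g (s • x + t • y) i) := by
        intro i
        rw [hcombo x y s t hst i]
        have := (strictConcaveOn_log_Ioi.concaveOn).2 (Set.mem_Ioi.mpr (hgx i))
          (Set.mem_Ioi.mpr (hgy i)) hs ht hst
        simpa [smul_eq_mul] using this
      have hlx : Real.log (WMC φ x) = ∑ i, Real.log (g x i) := by
        rw [hfact]; exact Real.log_prod (fun i _ => (hgx i).ne')
      have hly : Real.log (WMC φ y) = ∑ i, Real.log (g y i) := by
        rw [hfact]; exact Real.log_prod (fun i _ => (hgy i).ne')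
      have hlz : Real.log (WMC φ (s • x + t • y)) = ∑ i, Real.log (g (s • x + t • y) i) := by
        rw [hfact]; exact Real.log_prod (fun i _ => (hgz i).ne')
      have hsum := Finset.sum_le_sum (fun i (_ : i ∈ Finset.univ) => hlog i)
      rw [Finset.sum_add_distrib, ← Finset.mul_sum, ← Finset.mul_sum] at hsum
      simp only [smul_eq_mul]
      rw [hlz, hlx, hly]
      linarith
  tfae_have 2 → 1 := by
    intro h2
    by_contra h1
    obtain ⟨D1, a1, D2, a2, hP1, hP2, hne⟩ := two_primes_of_ncard_ne_one hφ h1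
    have hμ1 : mVec D1 a1 ∈ cubicalSet φ := by
      simp only [cubicalSet, Set.mem_iUnion]
      exact ⟨D1, a1, hP1, mVec_mem_cube D1 a1, fun i hi => by simp [mVec, hi]⟩
    have hμ2 : mVec D2 a2 ∈ cubicalSet φ := by
      simp only [cubicalSet, Set.mem_iUnion]
      exact ⟨D2, a2, hP2, mVec_mem_cube D2 a2, fun i hi => by simp [mVec, hi]⟩
    have hmid : (1/2 : ℝ) • mVec D1 a1 + (1/2 : ℝ) • mVec D2 a2 ∈ cubicalSet φ :=
      h2 hμ1 hμ2 (by norm_num) (by norm_num) (by norm_num)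
    have heq : (1/2 : ℝ) • mVec D1 a1 + (1/2 : ℝ) • mVec D2 a2 = midVec D1 D2 a1 a2 := by
      funext i
      simp only [Pi.add_apply, Pi.smul_apply, smul_eq_mul, midVec]
      ring
    rw [heq] at hmid
    simp only [cubicalSet, Set.mem_iUnion] at hmid
    obtain ⟨E, b, hEb, _, hval⟩ := hmid
    exact midVec_no_implicant hP1 hP2 hne hEb.1 hval
  tfae_have 3 → 1 := by
    intro h3
    by_contra h1
    obtain ⟨D1, a1, D2, a2, hP1, hP2, hne⟩ := two_primes_of_ncard_ne_one hφ h1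
    set mid := midVec D1 D2 a1 a2 with hmiddef
    have hcube : mid ∈ unitCube n := midVec_mem_cube D1 D2 a1 a2
    -- values of `mid` on its deterministic coordinates
    have hdval : ∀ i ∈ detDom mid, mid i = if detVal mid i then 1 else 0 := by
      intro i hi
      unfold detVal
      rcases hi with h0 | h1'
      · rw [if_neg (by rw [h0]; norm_num), h0]
        try norm_num
      · rw [if_pos h1', h1']
        try norm_num
    -- `φ` is false somewhere compatible with `mid`
    have hnimpl : ¬ Implicant φ (detDom mid) (detVal mid) :=
      fun h => midVec_no_implicant hP1 hP2 hne h hdval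
    obtain ⟨wbad, hwcov, hwφ⟩ : ∃ w, covers (detDom mid) (detVal mid) w ∧ φ w = false := by
      unfold Implicant at hnimpl
      push_neg at hnimpl
      obtain ⟨w, hc, hne'⟩ := hnimpl
      exact ⟨w, hc, by simpa using hne'⟩
    have hlt : WMC φ mid < 1 := by
      calc WMC φ mid < ∑ w : World n, pInd mid w := by
            apply Finset.sum_lt_sum
            · intro w _
              split
              · exact le_refl _
              · exact pInd_nonneg hcube w
            · refine ⟨wbad, Finset.mem_univ _, ?_⟩
              rw [if_neg (by simp [hwφ])]
              exact pInd_pos hcube hwcov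
        _ = 1 := sum_pInd _
    have hφa1 : φ a1 = true := hP1.1 a1 (self_mem_coverSet D1 a1)
    have hcov1 : covers (detDom mid) (detVal mid) a1 := by
      intro i hi
      obtain ⟨-, -, -, hmv⟩ := midVec_det i hi
      rw [← hmiddef] at hmv
      unfold detVal
      cases ha : a1 i <;> rw [ha] at hmv <;> norm_num at hmv
      · rw [if_neg (by rw [hmv]; norm_num)]
        try norm_num
      · rw [if_pos hmv]
        try norm_num
    have hposmid : 0 < WMC φ mid := by
      have hterm : (0:ℝ) < (if φ a1 then pInd mid a1 else 0) := by
        rw [if_pos hφa1]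
        exact pInd_pos hcube hcov1
      have hle : (if φ a1 then pInd mid a1 else 0) ≤ WMC φ mid := by
        apply Finset.single_le_sum (f := fun w => if φ w then pInd mid w else 0)
        · intro w _
          split
          · exact pInd_nonneg hcube w
          · exact le_refl _
        · exact Finset.mem_univ a1
      linarith
    have hμ1S : mVec D1 a1 ∈ {μ : Fin n → ℝ | μ ∈ unitCube n ∧ 0 < WMC φ μ} :=
      ⟨mVec_mem_cube D1 a1, by rw [WMC_mVec_eq_one hP1.1]; norm_num⟩
    have hμ2S : mVec D2 a2 ∈ {μ : Fin n → ℝ | μ ∈ unitCube n ∧ 0 < WMC φ μ} :=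
      ⟨mVec_mem_cube D2 a2, by rw [WMC_mVec_eq_one hP2.1]; norm_num⟩
    have hineq := h3.2 hμ1S hμ2S (by norm_num : (0:ℝ) ≤ 1/2) (by norm_num : (0:ℝ) ≤ 1/2)
      (by norm_num)
    have heq : (1/2 : ℝ) • mVec D1 a1 + (1/2 : ℝ) • mVec D2 a2 = mid := by
      funext i
      simp only [Pi.add_apply, Pi.smul_apply, smul_eq_mul, hmiddef, midVec]
      ring
    rw [heq] at hineq
    simp only [smul_eq_mul, WMC_mVec_eq_one hP1.1, WMC_mVec_eq_one hP2.1, Real.log_one] at hineq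
    have hlogneg : Real.log (WMC φ mid) < 0 := Real.log_neg hposmid hlt
    linarith
  tfae_finish
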